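/- Let p̂ : {0,1}^5 → ℝ be the joint distribution of (X, Z, Y, S, T) induced by some full SCM, and suppose p̂ gives probability greater than 0 to the event {X = 1, Y = 1}. Then the set of values of PN = P(Y_{X=0} = 0, X = 1, Y = 1)/P(X = 1, Y = 1) attained by full SCMs whose induced joint distribution of (X, Z, Y, S, T) equals p̂ is equal to the set of values of PN attained by reduced SCMs whose parameter γ equals the p̂-probability of {S = 1} and whose induced joint distribution of (X, Z, Y, S) equals the corresponding marginal of p̂. In particular, the tight lower and upper bounds on PN computed over the full models coincide with those computed over the reduced models. -/

import Mathlib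

open Finset

attribute [local instance] Classical.propDecidable

/-- A reduced SCM as in the paper (with its exogenous types bundled):
exogenous `U1`, `U2`, a parameter `γ` for the binary pre-treatment variable
`S`, and mechanisms `fX`, `fZ`, `fY`. -/
structure ReducedSCM where
  U1 : Type
  U2 : Type
  [fin1 : Fintype U1]
  [fin2 : Fintype U2]
  p1 : U1 → ℝ
  p2 : U2 → ℝ
  gamma : ℝ
  p1_nonneg : ∀ u, 0 ≤ p1 u
  p2_nonneg : ∀ u, 0 ≤ p2 u
  p1_sum : ∑ u, p1 u = 1
  p2_sum : ∑ u, p2 u = 1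
  gamma_nonneg : 0 ≤ gamma
  gamma_le_one : gamma ≤ 1
  fX : U1 → Bool
  fZ : Bool → Bool → U2 → Bool
  fY : Bool → U1 → Bool

attribute [instance] ReducedSCM.fin1 ReducedSCM.fin2

namespace ReducedSCM

/-- Probability of a unit `(u1, u2, s)`. -/
def w (M : ReducedSCM) (u : M.U1 × M.U2 × Bool) : ℝ :=
  M.p1 u.1 * M.p2 u.2.1 * (if u.2.2 then M.gamma else 1 - M.gamma)

/-- Probability of an event. -/
noncomputable def P (M : ReducedSCM) (E : M.U1 × M.U2 × Bool → Prop) : ℝ :=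
  ∑ u, if E u then M.w u else 0

def S (M : ReducedSCM) (u : M.U1 × M.U2 × Bool) : Bool := u.2.2

def X (M : ReducedSCM) (u : M.U1 × M.U2 × Bool) : Bool := M.fX u.1

def Z (M : ReducedSCM) (u : M.U1 × M.U2 × Bool) : Bool := M.fZ (M.S u) (M.X u) u.2.1

def Y (M : ReducedSCM) (u : M.U1 × M.U2 × Bool) : Bool := M.fY (M.Z u) u.1

/-- Potential outcome `Y_{X=x}`. -/
def Yx (M : ReducedSCM) (x : Bool) (u : M.U1 × M.U2 × Bool) : Bool :=
  M.fY (M.fZ (M.S u) x u.2.1) u.1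

/-- Probability of necessity `PN = P(Y_{X=0} = 0, X = 1, Y = 1) / P(X = 1, Y = 1)`. -/
noncomputable def PN (M : ReducedSCM) : ℝ :=
  M.P (fun u => M.Yx false u = false ∧ M.X u = true ∧ M.Y u = true)
    / M.P (fun u => M.X u = true ∧ M.Y u = true)

/-- Probability of necessity and sufficiency `PNS = P(Y_{X=1} = 1, Y_{X=0} = 0)`. -/
noncomputable def PNS (M : ReducedSCM) : ℝ :=
  M.P (fun u => M.Yx true u = true ∧ M.Yx false u = false)

end ReducedSCM

/-- A full SCM as in the paper (with its exogenous types bundled): exogenous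
`U1`, `U2`, `U5`, `U6` and mechanisms `fT`, `fS`, `fX`, `fZ`, `fY`. -/
structure FullSCM where
  U1 : Type
  U2 : Type
  U5 : Type
  U6 : Type
  [fin1 : Fintype U1]
  [fin2 : Fintype U2]
  [fin5 : Fintype U5]
  [fin6 : Fintype U6]
  p1 : U1 → ℝ
  p2 : U2 → ℝ
  p5 : U5 → ℝ
  p6 : U6 → ℝ
  p1_nonneg : ∀ u, 0 ≤ p1 u
  p2_nonneg : ∀ u, 0 ≤ p2 u
  p5_nonneg : ∀ u, 0 ≤ p5 u
  p6_nonneg : ∀ u, 0 ≤ p6 u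
  p1_sum : ∑ u, p1 u = 1
  p2_sum : ∑ u, p2 u = 1
  p5_sum : ∑ u, p5 u = 1
  p6_sum : ∑ u, p6 u = 1
  fT : U6 → Bool
  fS : Bool → U5 → Bool
  fX : U1 → Bool
  fZ : Bool → Bool → U2 → Bool
  fY : Bool → U1 → Bool

attribute [instance] FullSCM.fin1 FullSCM.fin2 FullSCM.fin5 FullSCM.fin6

namespace FullSCM

/-- Probability of a unit `(u1, u2, u5, u6)`. -/
def w (M : FullSCM) (u : M.U1 × M.U2 × M.U5 × M.U6) : ℝ :=
  M.p1 u.1 * M.p2 u.2.1 * M.p5 u.2.2.1 * M.p6 u.2.2.2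

/-- Probability of an event. -/
noncomputable def P (M : FullSCM) (E : M.U1 × M.U2 × M.U5 × M.U6 → Prop) : ℝ :=
  ∑ u, if E u then M.w u else 0

def T (M : FullSCM) (u : M.U1 × M.U2 × M.U5 × M.U6) : Bool := M.fT u.2.2.2

def S (M : FullSCM) (u : M.U1 × M.U2 × M.U5 × M.U6) : Bool := M.fS (M.T u) u.2.2.1

def X (M : FullSCM) (u : M.U1 × M.U2 × M.U5 × M.U6) : Bool := M.fX u.1

def Z (M : FullSCM) (u : M.U1 × M.U2 × M.U5 × M.U6) : Bool :=
  M.fZ (M.S u) (M.X u) u.2.1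

def Y (M : FullSCM) (u : M.U1 × M.U2 × M.U5 × M.U6) : Bool := M.fY (M.Z u) u.1

/-- Potential outcome `Y_{X=x}`. -/
def Yx (M : FullSCM) (x : Bool) (u : M.U1 × M.U2 × M.U5 × M.U6) : Bool :=
  M.fY (M.fZ (M.S u) x u.2.1) u.1

/-- Probability of necessity `PN = P(Y_{X=0} = 0, X = 1, Y = 1) / P(X = 1, Y = 1)`. -/
noncomputable def PN (M : FullSCM) : ℝ :=
  M.P (fun u => M.Yx false u = false ∧ M.X u = true ∧ M.Y u = true)
    / M.P (fun u => M.X u = true ∧ M.Y u = true)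

/-- Probability of necessity and sufficiency `PNS = P(Y_{X=1} = 1, Y_{X=0} = 0)`. -/
noncomputable def PNS (M : FullSCM) : ℝ :=
  M.P (fun u => M.Yx true u = true ∧ M.Yx false u = false)

end FullSCM

/-- Probability that a distribution `p̂` on `(x, z, y, s, t) ∈ {0,1}^5` assigns
to an event. -/
noncomputable def phatP (phat : Bool × Bool × Bool × Bool × Bool → ℝ)
    (E : Bool × Bool × Bool × Bool × Bool → Prop) : ℝ :=
  ∑ v, if E v then phat v else 0

/-- A full SCM induces `p̂` as the joint distribution of `(X, Z, Y, S, T)`. -/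
def FullSCM.induces (M : FullSCM)
    (phat : Bool × Bool × Bool × Bool × Bool → ℝ) : Prop :=
  ∀ x z y s t : Bool,
    M.P (fun u => M.X u = x ∧ M.Z u = z ∧ M.Y u = y ∧ M.S u = s ∧ M.T u = t)
      = phat (x, z, y, s, t)

/-- A reduced SCM induces the `(X, Z, Y, S)`-marginal of `p̂` as the joint
distribution of `(X, Z, Y, S)`. -/
def ReducedSCM.inducesMarginal (M : ReducedSCM)
    (phat : Bool × Bool × Bool × Bool × Bool → ℝ) : Prop :=
  ∀ x z y s : Bool,
    M.P (fun u => M.X u = x ∧ M.Z u = z ∧ M.Y u = y ∧ M.S u = s)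
      = ∑ t : Bool, phat (x, z, y, s, t)

section AuxTest
variable {U1 U2 : Type} [Fintype U1] [Fintype U2]

noncomputable def hsum (p1 : U1 → ℝ) (p2 : U2 → ℝ) (A : U1 → U2 → Prop) : ℝ :=
  ∑ u1, ∑ u2, if A u1 u2 then p1 u1 * p2 u2 else 0

lemma hsum_False (p1 : U1 → ℝ) (p2 : U2 → ℝ) :
    hsum p1 p2 (fun _ _ => False) = 0 := by simp [hsum]

lemma hsum_one {p1 : U1 → ℝ} {p2 : U2 → ℝ}
    (h1 : ∑ u, p1 u = 1) (h2 : ∑ u, p2 u = 1) :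
    hsum p1 p2 (fun _ _ => True) = 1 := by
  unfold hsum
  simp only [if_true, ← Finset.mul_sum, h2, mul_one, h1]

lemma ite_sum {α : Type} [Fintype α] (c : Prop) [Decidable c] (f : α → ℝ) :
    (if c then ∑ u, f u else 0) = ∑ u, if c then f u else 0 := by
  split_ifs <;> simp

end AuxTest
noncomputable def FullSCM.q2 (M : FullSCM) (s t : Bool) : ℝ :=
  ∑ u5, ∑ u6, if M.fS (M.fT u6) u5 = s ∧ M.fT u6 = t then M.p5 u5 * M.p6 u6 else 0

noncomputable def FullSCM.qS (M : FullSCM) (s : Bool) : ℝ := ∑ t, M.q2 s t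

lemma FullSCM.q2_nonneg (M : FullSCM) (s t : Bool) : 0 ≤ M.q2 s t := by
  refine Finset.sum_nonneg fun u5 _ => Finset.sum_nonneg fun u6 _ => ?_
  split_ifs
  · exact mul_nonneg (M.p5_nonneg _) (M.p6_nonneg _)
  · exact le_refl 0

lemma FullSCM.qS_eq (M : FullSCM) (s : Bool) :
    M.qS s = ∑ u5, ∑ u6, if M.fS (M.fT u6) u5 = s then M.p5 u5 * M.p6 u6 else 0 := by
  unfold FullSCM.qS FullSCM.q2
  rw [Finset.sum_comm]
  refine Finset.sum_congr rfl fun u5 _ => ?_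
  rw [Finset.sum_comm]
  refine Finset.sum_congr rfl fun u6 _ => ?_
  rw [Fintype.sum_bool]
  cases hT : M.fT u6 <;> simp [hT]

lemma FullSCM.qS_total (M : FullSCM) : M.qS true + M.qS false = 1 := by
  rw [M.qS_eq, M.qS_eq, ← Finset.sum_add_distrib]
  have h : ∀ u5 : M.U5,
      ((∑ u6, if M.fS (M.fT u6) u5 = true then M.p5 u5 * M.p6 u6 else 0)
        + ∑ u6, if M.fS (M.fT u6) u5 = false then M.p5 u5 * M.p6 u6 else 0)
      = M.p5 u5 * ∑ u6, M.p6 u6 := by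
    intro u5
    rw [← Finset.sum_add_distrib, Finset.mul_sum]
    refine Finset.sum_congr rfl fun u6 _ => ?_
    cases h : M.fS (M.fT u6) u5 <;> simp [h]
  rw [Finset.sum_congr rfl fun u5 _ => h u5]
  simp only [M.p6_sum, mul_one, M.p5_sum]
lemma sum4_swap {A B C D : Type} [Fintype A] [Fintype B] [Fintype C] [Fintype D]
    (f : A → B → C → D → ℝ) :
    ∑ a, ∑ b, ∑ c, ∑ d, f a b c d = ∑ c, ∑ d, ∑ a, ∑ b, f a b c d := by
  rw [Finset.sum_congr rfl fun a _ => Finset.sum_comm]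
  rw [Finset.sum_comm]
  refine Finset.sum_congr rfl fun c _ => ?_
  rw [Finset.sum_congr rfl fun a _ => Finset.sum_comm]
  rw [Finset.sum_comm]

lemma FullSCM.P_ST (M : FullSCM) (A : M.U1 → M.U2 → Bool → Bool → Prop) :
    M.P (fun u => A u.1 u.2.1 (M.S u) (M.T u))
      = ∑ s, ∑ t, hsum M.p1 M.p2 (fun a b => A a b s t) * M.q2 s t := by
  have key : ∀ u : M.U1 × M.U2 × M.U5 × M.U6,
      (if A u.1 u.2.1 (M.S u) (M.T u) then M.w u else 0)
        = ∑ s, ∑ t, (if A u.1 u.2.1 s t then M.p1 u.1 * M.p2 u.2.1 else 0)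
            * (if M.fS (M.fT u.2.2.2) u.2.2.1 = s ∧ M.fT u.2.2.2 = t
                then M.p5 u.2.2.1 * M.p6 u.2.2.2 else 0) := by
    intro u
    simp only [FullSCM.S, FullSCM.T, FullSCM.w, Fintype.sum_bool]
    rcases Bool.eq_false_or_eq_true (M.fT u.2.2.2) with hT | hT <;>
    rcases Bool.eq_false_or_eq_true (M.fS (M.fT u.2.2.2) u.2.2.1) with hS | hS <;>
    simp only [hS] <;> simp only [hT] <;> simp <;> split_ifs <;> ring
  unfold FullSCM.P
  rw [Finset.sum_congr rfl fun u _ => key u]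
  rw [Finset.sum_comm]
  refine Finset.sum_congr rfl fun s _ => ?_
  rw [Finset.sum_comm]
  refine Finset.sum_congr rfl fun t _ => ?_
  unfold hsum FullSCM.q2
  simp only [Fintype.sum_prod_type]
  simp only [Finset.sum_mul, Finset.mul_sum]
  rw [sum4_swap]
lemma FullSCM.P_S (M : FullSCM) (A : M.U1 → M.U2 → Bool → Prop) :
    M.P (fun u => A u.1 u.2.1 (M.S u))
      = ∑ s, hsum M.p1 M.p2 (fun a b => A a b s) * M.qS s := by
  refine Eq.trans (M.P_ST (fun a b s _ => A a b s)) ?_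
  refine Finset.sum_congr rfl fun s _ => ?_
  simp only [FullSCM.qS, Finset.mul_sum]

lemma ReducedSCM.P_S (M : ReducedSCM) (A : M.U1 → M.U2 → Bool → Prop) :
    M.P (fun u => A u.1 u.2.1 u.2.2)
      = ∑ s, hsum M.p1 M.p2 (fun a b => A a b s) * (if s then M.gamma else 1 - M.gamma) := by
  unfold ReducedSCM.P ReducedSCM.w hsum
  simp only [Fintype.sum_prod_type]
  simp only [Finset.sum_mul, Finset.mul_sum, ite_mul, zero_mul]
  rw [Finset.sum_congr rfl fun u1 _ => Finset.sum_comm]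
  rw [Finset.sum_comm]
lemma FullSCM.P_joint (M : FullSCM) (x z y s t : Bool) :
    M.P (fun u => M.X u = x ∧ M.Z u = z ∧ M.Y u = y ∧ M.S u = s ∧ M.T u = t)
      = hsum M.p1 M.p2 (fun a b => M.fX a = x ∧ M.fZ s (M.fX a) b = z
          ∧ M.fY (M.fZ s (M.fX a) b) a = y) * M.q2 s t := by
  refine Eq.trans (M.P_ST (fun a b s' t' => M.fX a = x ∧ M.fZ s' (M.fX a) b = z
      ∧ M.fY (M.fZ s' (M.fX a) b) a = y ∧ s' = s ∧ t' = t)) ?_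
  cases s <;> cases t <;> simp [Fintype.sum_bool, hsum_False]

lemma ReducedSCM.P_joint (N : ReducedSCM) (x z y s : Bool) :
    N.P (fun u => N.X u = x ∧ N.Z u = z ∧ N.Y u = y ∧ N.S u = s)
      = hsum N.p1 N.p2 (fun a b => N.fX a = x ∧ N.fZ s (N.fX a) b = z
          ∧ N.fY (N.fZ s (N.fX a) b) a = y) * (if s then N.gamma else 1 - N.gamma) := by
  refine Eq.trans (N.P_S (fun a b s' => N.fX a = x ∧ N.fZ s' (N.fX a) b = z
      ∧ N.fY (N.fZ s' (N.fX a) b) a = y ∧ s' = s)) ?_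
  cases s <;> simp [Fintype.sum_bool, hsum_False]
lemma FullSCM.phatP_eq (M : FullSCM) {phat : Bool × Bool × Bool × Bool × Bool → ℝ}
    (h : M.induces phat) (E : Bool × Bool × Bool × Bool × Bool → Prop) :
    phatP phat E = M.P (fun u => E (M.X u, M.Z u, M.Y u, M.S u, M.T u)) := by
  have h' : ∀ v, phat v = M.P (fun u => (M.X u, M.Z u, M.Y u, M.S u, M.T u) = v) := by
    rintro ⟨x, z, y, s, t⟩
    rw [← h x z y s t]
    unfold FullSCM.P
    simp only [Prod.mk.injEq]
    refine Finset.sum_congr rfl fun u _ => ?_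
    split_ifs <;> rfl
  unfold phatP FullSCM.P
  simp only [h']
  unfold FullSCM.P
  simp only [ite_sum]
  rw [Finset.sum_comm]
  refine Finset.sum_congr rfl fun u _ => ?_
  rw [Finset.sum_eq_single (M.X u, M.Z u, M.Y u, M.S u, M.T u)]
  · split_ifs with h1 h2
    · rfl
    · exact absurd rfl h2
    · rfl
  · intro b _ hb
    split_ifs with h1 h2
    · exact absurd h2.symm hb
    · rfl
    · rfl
  · intro hmem
    exact absurd (Finset.mem_univ _) hmem
lemma FullSCM.qS_nonneg (M : FullSCM) (s : Bool) : 0 ≤ M.qS s :=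
  Finset.sum_nonneg fun t _ => M.q2_nonneg s t

lemma FullSCM.induces_fact (M : FullSCM) {phat : Bool × Bool × Bool × Bool × Bool → ℝ}
    (h : M.induces phat) (x z y s t : Bool) :
    phat (x, z, y, s, t) = hsum M.p1 M.p2 (fun a b => M.fX a = x ∧ M.fZ s (M.fX a) b = z
        ∧ M.fY (M.fZ s (M.fX a) b) a = y) * M.q2 s t := by
  rw [← h x z y s t]
  exact M.P_joint x z y s t

lemma FullSCM.induces_gamma (M : FullSCM) {phat : Bool × Bool × Bool × Bool × Bool → ℝ}
    (h : M.induces phat) :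
    phatP phat (fun v => v.2.2.2.1 = true) = M.qS true := by
  rw [M.phatP_eq h]
  refine Eq.trans (M.P_S (fun _ _ s => s = true)) ?_
  rw [Fintype.sum_bool]
  have h1 : hsum M.p1 M.p2 (fun _ _ => (true : Bool) = true) = 1 := by
    rw [show (fun (_ : M.U1) (_ : M.U2) => (true : Bool) = true) = (fun _ _ => True) from by
      funext a b; simp]
    exact hsum_one M.p1_sum M.p2_sum
  have h2 : hsum M.p1 M.p2 (fun _ _ => (false : Bool) = true) = 0 := by
    rw [show (fun (_ : M.U1) (_ : M.U2) => (false : Bool) = true) = (fun _ _ => False) from by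
      funext a b; simp]
    exact hsum_False M.p1 M.p2
  rw [h1, h2, one_mul, zero_mul, add_zero]

/-- The reduced SCM associated to a full SCM. -/
noncomputable def FullSCM.toReduced (M : FullSCM) : ReducedSCM where
  U1 := M.U1
  U2 := M.U2
  fin1 := M.fin1
  fin2 := M.fin2
  p1 := M.p1
  p2 := M.p2
  gamma := M.qS true
  p1_nonneg := M.p1_nonneg
  p2_nonneg := M.p2_nonneg
  p1_sum := M.p1_sum
  p2_sum := M.p2_sum
  gamma_nonneg := M.qS_nonneg true
  gamma_le_one := by have h1 := M.qS_total; have h2 := M.qS_nonneg false; linarith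
  fX := M.fX
  fZ := M.fZ
  fY := M.fY

lemma toReduced_gammafun (M : FullSCM) (s : Bool) :
    (if s then M.toReduced.gamma else 1 - M.toReduced.gamma) = M.qS s := by
  cases s
  · show 1 - M.qS true = M.qS false
    have := M.qS_total; linarith
  · rfl

lemma toReduced_PN (M : FullSCM) : M.toReduced.PN = M.PN := by
  have hnum : M.toReduced.P (fun u => M.toReduced.Yx false u = false
        ∧ M.toReduced.X u = true ∧ M.toReduced.Y u = true)
      = M.P (fun u => M.Yx false u = false ∧ M.X u = true ∧ M.Y u = true) := by
    refine Eq.trans (ReducedSCM.P_S M.toReduced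
      (fun a b s => M.fY (M.fZ s false b) a = false ∧ M.fX a = true
        ∧ M.fY (M.fZ s (M.fX a) b) a = true)) ?_
    refine Eq.trans ?_ (M.P_S (fun a b s => M.fY (M.fZ s false b) a = false ∧ M.fX a = true
        ∧ M.fY (M.fZ s (M.fX a) b) a = true)).symm
    refine Finset.sum_congr rfl fun s _ => ?_
    rw [toReduced_gammafun]
    rfl
  have hden : M.toReduced.P (fun u => M.toReduced.X u = true ∧ M.toReduced.Y u = true)
      = M.P (fun u => M.X u = true ∧ M.Y u = true) := by
    refine Eq.trans (ReducedSCM.P_S M.toReduced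
      (fun a b s => M.fX a = true ∧ M.fY (M.fZ s (M.fX a) b) a = true)) ?_
    refine Eq.trans ?_ (M.P_S (fun a b s => M.fX a = true
        ∧ M.fY (M.fZ s (M.fX a) b) a = true)).symm
    refine Finset.sum_congr rfl fun s _ => ?_
    rw [toReduced_gammafun]
    rfl
  unfold ReducedSCM.PN FullSCM.PN
  rw [hnum, hden]

lemma toReduced_marg (M : FullSCM) {phat : Bool × Bool × Bool × Bool × Bool → ℝ}
    (h : M.induces phat) : M.toReduced.inducesMarginal phat := by
  intro x z y s
  have h1 : M.toReduced.P (fun u => M.toReduced.X u = x ∧ M.toReduced.Z u = z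
        ∧ M.toReduced.Y u = y ∧ M.toReduced.S u = s)
      = hsum M.p1 M.p2 (fun a b => M.fX a = x ∧ M.fZ s (M.fX a) b = z
          ∧ M.fY (M.fZ s (M.fX a) b) a = y)
        * (if s then M.toReduced.gamma else 1 - M.toReduced.gamma) :=
    ReducedSCM.P_joint _ x z y s
  rw [h1, toReduced_gammafun]
  rw [Fintype.sum_bool, ← h x z y s true, ← h x z y s false, M.P_joint, M.P_joint]
  have hqs : M.qS s = M.q2 s true + M.q2 s false := by
    simp [FullSCM.qS, Fintype.sum_bool]
  rw [hqs, mul_add]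
/-- A full SCM built from a reduced SCM and the `(S, T)`-mechanisms of a
reference full SCM. -/
noncomputable def mkFull (N : ReducedSCM) (M0 : FullSCM) : FullSCM where
  U1 := N.U1
  U2 := N.U2
  U5 := M0.U5
  U6 := M0.U6
  fin1 := N.fin1
  fin2 := N.fin2
  fin5 := M0.fin5
  fin6 := M0.fin6
  p1 := N.p1
  p2 := N.p2
  p5 := M0.p5
  p6 := M0.p6
  p1_nonneg := N.p1_nonneg
  p2_nonneg := N.p2_nonneg
  p5_nonneg := M0.p5_nonneg
  p6_nonneg := M0.p6_nonneg
  p1_sum := N.p1_sum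
  p2_sum := N.p2_sum
  p5_sum := M0.p5_sum
  p6_sum := M0.p6_sum
  fT := M0.fT
  fS := M0.fS
  fX := N.fX
  fZ := N.fZ
  fY := N.fY

lemma mkFull_gammafun (N : ReducedSCM) (M0 : FullSCM) (hγ : N.gamma = M0.qS true) (s : Bool) :
    (if s then N.gamma else 1 - N.gamma) = M0.qS s := by
  cases s
  · show 1 - N.gamma = M0.qS false
    rw [hγ]; have := M0.qS_total; linarith
  · exact hγ

lemma mkFull_PN (N : ReducedSCM) (M0 : FullSCM) (hγ : N.gamma = M0.qS true) :
    (mkFull N M0).PN = N.PN := by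
  have hnum : (mkFull N M0).P (fun u => (mkFull N M0).Yx false u = false
        ∧ (mkFull N M0).X u = true ∧ (mkFull N M0).Y u = true)
      = N.P (fun u => N.Yx false u = false ∧ N.X u = true ∧ N.Y u = true) := by
    refine Eq.trans ((mkFull N M0).P_S
      (fun a b s => N.fY (N.fZ s false b) a = false ∧ N.fX a = true
        ∧ N.fY (N.fZ s (N.fX a) b) a = true)) ?_
    refine Eq.trans ?_ (ReducedSCM.P_S N (fun a b s => N.fY (N.fZ s false b) a = false
        ∧ N.fX a = true ∧ N.fY (N.fZ s (N.fX a) b) a = true)).symm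
    refine Finset.sum_congr rfl fun s _ => ?_
    rw [mkFull_gammafun N M0 hγ]
    rfl
  have hden : (mkFull N M0).P (fun u => (mkFull N M0).X u = true ∧ (mkFull N M0).Y u = true)
      = N.P (fun u => N.X u = true ∧ N.Y u = true) := by
    refine Eq.trans ((mkFull N M0).P_S
      (fun a b s => N.fX a = true ∧ N.fY (N.fZ s (N.fX a) b) a = true)) ?_
    refine Eq.trans ?_ (ReducedSCM.P_S N (fun a b s => N.fX a = true
        ∧ N.fY (N.fZ s (N.fX a) b) a = true)).symm
    refine Finset.sum_congr rfl fun s _ => ?_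
    rw [mkFull_gammafun N M0 hγ]
    rfl
  unfold ReducedSCM.PN FullSCM.PN
  rw [hnum, hden]

lemma mkFull_induces (N : ReducedSCM) (M0 : FullSCM)
    {phat : Bool × Bool × Bool × Bool × Bool → ℝ} (h0 : M0.induces phat)
    (hγ : N.gamma = M0.qS true) (hm : N.inducesMarginal phat) :
    (mkFull N M0).induces phat := by
  intro x z y s t
  refine Eq.trans ((mkFull N M0).P_joint x z y s t) ?_
  show hsum N.p1 N.p2 (fun a b => N.fX a = x ∧ N.fZ s (N.fX a) b = z
      ∧ N.fY (N.fZ s (N.fX a) b) a = y) * M0.q2 s t = phat (x, z, y, s, t)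
  have h1 := hm x z y s
  rw [N.P_joint x z y s, mkFull_gammafun N M0 hγ] at h1
  have h2 : ∑ t' : Bool, phat (x, z, y, s, t')
      = hsum M0.p1 M0.p2 (fun a b => M0.fX a = x ∧ M0.fZ s (M0.fX a) b = z
          ∧ M0.fY (M0.fZ s (M0.fX a) b) a = y) * M0.qS s := by
    rw [Fintype.sum_bool, ← h0 x z y s true, ← h0 x z y s false, M0.P_joint, M0.P_joint]
    have hqs : M0.qS s = M0.q2 s true + M0.q2 s false := by
      simp [FullSCM.qS, Fintype.sum_bool]
    rw [hqs, mul_add]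
  have hmg := h1.trans h2
  by_cases hq : M0.qS s = 0
  · have hq2 : M0.q2 s t = 0 := by
      have ha := M0.q2_nonneg s true
      have hb := M0.q2_nonneg s false
      have hc : M0.q2 s true + M0.q2 s false = 0 := by
        rw [show M0.q2 s true + M0.q2 s false = M0.qS s from by
          simp [FullSCM.qS, Fintype.sum_bool], hq]
      cases t <;> linarith
    rw [hq2, mul_zero, ← h0 x z y s t, M0.P_joint, hq2, mul_zero]
  · have heq := mul_right_cancel₀ hq hmg
    rw [heq, ← h0 x z y s t, M0.P_joint]

/-- If `p̂` is the joint distribution of `(X, Z, Y, S, T)` of some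
full SCM and `p̂(X = 1, Y = 1) > 0`, then the set of PN values attained by full
SCMs inducing `p̂` equals the set of PN values attained by reduced SCMs whose
`γ` is `p̂(S = 1)` and whose `(X, Z, Y, S)`-distribution is the marginal of `p̂`. -/
theorem PN_values_full_eq_reduced
    (phat : Bool × Bool × Bool × Bool × Bool → ℝ)
    (hind : ∃ M0 : FullSCM, M0.induces phat)
    (hpos : 0 < phatP phat (fun v => v.1 = true ∧ v.2.2.1 = true)) :
    {r : ℝ | ∃ M : FullSCM, M.induces phat ∧ M.PN = r}
      = {r : ℝ | ∃ M' : ReducedSCM,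
          M'.gamma = phatP phat (fun v => v.2.2.2.1 = true) ∧
          M'.inducesMarginal phat ∧ M'.PN = r} := by
  ext r
  simp only [Set.mem_setOf_eq]
  constructor
  · rintro ⟨M, hMind, rfl⟩
    exact ⟨M.toReduced, (M.induces_gamma hMind).symm, toReduced_marg M hMind, toReduced_PN M⟩
  · rintro ⟨N, hγ, hm, rfl⟩
    obtain ⟨M0, h0⟩ := hind
    have hγ' : N.gamma = M0.qS true := hγ.trans (M0.induces_gamma h0)
    exact ⟨mkFull N M0, mkFull_induces N M0 h0 hγ' hm, mkFull_PN N M0 hγ'⟩
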